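/- Let X ∈ L(H_n ⊗ H_m) be a normal operator with eigenvalues {λ_i} and corresponding orthonormal eigenvectors {|v_i⟩}. Then ‖X‖_{S(k)} ≤ Σ_i |λ_i| · ‖|v_i⟩‖_{s(k)}². -/

import Mathlib

noncomputable section
open scoped BigOperators

/-- Inner product (conjugate-linear in the first argument). -/
def ip {ι : Type*} [Fintype ι] (w v : ι → ℂ) : ℂ := ∑ p, star (w p) * v p

/-- Euclidean norm. -/
def nrm {ι : Type*} [Fintype ι] (v : ι → ℂ) : ℝ := Real.sqrt (ip v v).re

/-- Elementary tensor (product vector). -/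
def prodVec {n m : ℕ} (a : Fin n → ℂ) (b : Fin m → ℂ) : Fin n × Fin m → ℂ :=
  fun p => a p.1 * b p.2

/-- Schmidt rank at most `k`: `v` is a sum of `k` product vectors. -/
def SRle {n m : ℕ} (k : ℕ) (v : Fin n × Fin m → ℂ) : Prop :=
  ∃ (a : Fin k → Fin n → ℂ) (b : Fin k → Fin m → ℂ), v = ∑ i, prodVec (a i) (b i)

/-- The `k`-th vector norm. -/
def vecNorm {n m : ℕ} (k : ℕ) (v : Fin n × Fin m → ℂ) : ℝ :=
  sSup {r | ∃ w, nrm w = 1 ∧ SRle k w ∧ r = ‖ip w v‖}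

/-- The `k`-th operator norm. -/
def opNorm {n m : ℕ} (k : ℕ) (X : Matrix (Fin n × Fin m) (Fin n × Fin m) ℂ) : ℝ :=
  sSup {r | ∃ v w, nrm v = 1 ∧ nrm w = 1 ∧ SRle k v ∧ SRle k w ∧
    r = ‖ip w (X.mulVec v)‖}

/-- Rank-one operator `|w⟩⟨v|`. -/
def outer {ι : Type*} (w v : ι → ℂ) : Matrix ι ι ℂ := Matrix.of fun p q => w p * star (v q)

/-- `k`-block positivity. -/
def BlockPos {n m : ℕ} (k : ℕ) (Y : Matrix (Fin n × Fin m) (Fin n × Fin m) ℂ) : Prop :=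
  ∀ v : Fin n × Fin m → ℂ, nrm v = 1 → SRle k v → 0 ≤ (ip v (Y.mulVec v)).re

/-- Schmidt number at most `k`. -/
def SNle {n m : ℕ} (k : ℕ) (ρ : Matrix (Fin n × Fin m) (Fin n × Fin m) ℂ) : Prop :=
  ∃ (N : ℕ) (p : Fin N → ℝ) (v : Fin N → Fin n × Fin m → ℂ),
    (∀ i, 0 ≤ p i) ∧ (∑ i, p i) = 1 ∧ (∀ i, nrm (v i) = 1) ∧ (∀ i, SRle k (v i)) ∧
    ρ = ∑ i, (p i : ℂ) • outer (v i) (v i)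

lemma ip_eq_inner {ι : Type*} [Fintype ι] (w v : ι → ℂ) :
    ip w v = @inner ℂ (EuclideanSpace ℂ ι) _ ((WithLp.equiv 2 _).symm w) ((WithLp.equiv 2 _).symm v) := by
  simp [ip, PiLp.inner_apply, RCLike.inner_apply, mul_comm]

lemma nrm_eq_norm {ι : Type*} [Fintype ι] (v : ι → ℂ) :
    nrm v = ‖(WithLp.equiv 2 (ι → ℂ)).symm v‖ := by
  rw [nrm, ip_eq_inner, @norm_eq_sqrt_re_inner ℂ]; rfl

lemma abs_ip_le {ι : Type*} [Fintype ι] (w v : ι → ℂ) :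
    ‖ip w v‖ ≤ nrm w * nrm v := by
  rw [ip_eq_inner, nrm_eq_norm, nrm_eq_norm]
  exact norm_inner_le_norm _ _

lemma ip_star {ι : Type*} [Fintype ι] (w v : ι → ℂ) : ip v w = star (ip w v) := by
  simp [ip, mul_comm]

/-- bound: |⟨w|x⟩| ≤ vecNorm k x for unit SR≤k w -/
lemma abs_ip_le_vecNorm {n m k : ℕ} (w x : Fin n × Fin m → ℂ)
    (hw1 : nrm w = 1) (hwk : SRle k w) :
    ‖ip w x‖ ≤ vecNorm k x := by
  apply le_csSup
  · refine ⟨nrm x, ?_⟩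
    rintro r ⟨u, hu1, _, rfl⟩
    calc ‖ip u x‖ ≤ nrm u * nrm x := abs_ip_le u x
    _ = nrm x := by rw [hu1, one_mul]
  · exact ⟨w, hw1, hwk, rfl⟩

lemma completeness {n m : ℕ} (v : Fin n × Fin m → Fin n × Fin m → ℂ)
    (horth : ∀ i j, ip (v i) (v j) = if i = j then 1 else 0)
    (u : Fin n × Fin m → ℂ) : u = ∑ i, ip (v i) u • v i := by
  set U := (Matrix.of fun p i => v i p : Matrix (Fin n × Fin m) (Fin n × Fin m) ℂ) with hU
  have h1 : U.conjTranspose * U = 1 := by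
    ext i j
    simp only [Matrix.mul_apply, Matrix.conjTranspose_apply, hU, Matrix.of_apply,
      Matrix.one_apply]
    rw [← horth i j]; simp [ip]
  have h2 : U * U.conjTranspose = 1 := mul_eq_one_comm.mp h1
  funext p
  have := congrArg (fun M => (Matrix.mulVec M u) p) h2
  simp only [Matrix.one_mulVec] at this
  rw [← this]
  simp only [Matrix.mulVec, dotProduct, Matrix.mul_apply, Matrix.conjTranspose_apply,
    hU, Matrix.of_apply, Finset.sum_apply, Pi.smul_apply, smul_eq_mul, ip]
  beta_reduce
  simp_rw [Finset.sum_mul]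
  rw [Finset.sum_comm]
  exact Finset.sum_congr rfl fun i _ => Finset.sum_congr rfl fun q _ => by ring

/-- for a normal operator with eigenvalues `μ_i` and orthonormal
eigenvectors `v_i`, `‖X‖_{S(k)} ≤ Σ_i |μ_i| ‖v_i‖_{s(k)}²`. -/
theorem stmt8 {n m k : ℕ} (hmn : m ≤ n) (hk1 : 1 ≤ k) (hkm : k ≤ m)
    (X : Matrix (Fin n × Fin m) (Fin n × Fin m) ℂ)
    (μ : Fin n × Fin m → ℂ) (v : Fin n × Fin m → Fin n × Fin m → ℂ)
    (horth : ∀ i j, ip (v i) (v j) = if i = j then 1 else 0)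
    (heig : ∀ i, X.mulVec (v i) = μ i • v i) :
    opNorm k X ≤ ∑ i, ‖μ i‖ * vecNorm k (v i) ^ 2 := by
  have hRHS : 0 ≤ ∑ i, ‖μ i‖ * vecNorm k (v i) ^ 2 := by
    apply Finset.sum_nonneg
    intro i _
    exact mul_nonneg (norm_nonneg _) (sq_nonneg _)
  apply Real.sSup_le _ hRHS
  rintro r ⟨u, w, hu1, hw1, huk, hwk, rfl⟩
  -- expand
  have hexp : ip w (X.mulVec u) = ∑ i, μ i * (ip (v i) u * ip w (v i)) := by
    have hu : u = ∑ i, ip (v i) u • v i := completeness v horth u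
    calc ip w (X.mulVec u) = ip w (X.mulVec (∑ i, ip (v i) u • v i)) := by rw [← hu]
    _ = ip w (∑ i, ip (v i) u • X.mulVec (v i)) := by
        congr 1
        rw [← Matrix.mulVecLin_apply, map_sum]
        simp [Matrix.mulVecLin_apply, Matrix.mulVec_smul]
    _ = ip w (∑ i, ip (v i) u • (μ i • v i)) := by simp_rw [heig]
    _ = ∑ i, μ i * (ip (v i) u * ip w (v i)) := by
        simp [ip, Finset.mul_sum]
        rw [Finset.sum_comm]
        congr 1; funext i
        congr 1; funext p
        ring
  rw [hexp]
  calc ‖∑ i, μ i * (ip (v i) u * ip w (v i))‖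
      ≤ ∑ i, ‖μ i * (ip (v i) u * ip w (v i))‖ := by
        exact norm_sum_le _ _
    _ ≤ ∑ i, ‖μ i‖ * vecNorm k (v i) ^ 2 := by
        apply Finset.sum_le_sum
        intro i _
        rw [norm_mul, norm_mul]
        have h1 : ‖ip (v i) u‖ ≤ vecNorm k (v i) := by
          rw [ip_star, norm_star]
          exact abs_ip_le_vecNorm u (v i) hu1 huk
        have h2 : ‖ip w (v i)‖ ≤ vecNorm k (v i) :=
          abs_ip_le_vecNorm w (v i) hw1 hwk
        calc ‖μ i‖ * (‖ip (v i) u‖ * ‖ip w (v i)‖)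
            ≤ ‖μ i‖ * (vecNorm k (v i) * vecNorm k (v i)) := by
              apply mul_le_mul_of_nonneg_left _ (norm_nonneg _)
              exact mul_le_mul h1 h2 (norm_nonneg _)
                ((norm_nonneg _).trans h1)
          _ = ‖μ i‖ * vecNorm k (v i) ^ 2 := by ring
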